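/- Let R be a unital non-associative ring, G a commutative monoid, π a G-derivation on R, and S = R[G;π] the Ore monoid ring. If s ∈ S^G, then for every u ∈ S the commutator [s,u] lies in the additive subgroup of S generated by the products [s,r]·t with r ∈ R (embedded in S as r x^e) and t ∈ S. In particular, if [s,r] = 0 for all r ∈ R, then s belongs to the commuter C(S). -/

import Mathlib

open scoped Classical

/-! Common framework: Ore monoid rings `R[G;π]` over a unital non-associative ring `R`
and a monoid `G`.  A `G`-derivation `π = {π^a_b}` is encoded as a map
`π : G → R → (G →₀ R)`, where `π a r b = π^a_b(r)`; axiom (D0) (finite support in `b`)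
is built into the `Finsupp` encoding.  The Ore monoid ring `S = R[G;π]` is the
additive group `G →₀ R` of finitely supported formal sums `Σ r_a xᵃ`
(with `Finsupp.single a r` representing `r xᵃ`), equipped with the
multiplication `GDeriv.mul` below. -/

/-- A two-sided ideal with respect to a (possibly non-associative, non-unital)
multiplication `m` on an additive group `A`. -/
structure IsIdealWith {A : Type*} [AddCommGroup A] (m : A → A → A) (J : Set A) : Prop where
  zero_mem : (0 : A) ∈ J
  add_mem : ∀ {x y : A}, x ∈ J → y ∈ J → x + y ∈ J
  neg_mem : ∀ {x : A}, x ∈ J → -x ∈ J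
  mul_mem_left : ∀ (r : A) {x : A}, x ∈ J → m r x ∈ J
  mul_mem_right : ∀ {x : A} (r : A), x ∈ J → m x r ∈ J

/-- The subset `F` of `A` is a field with respect to the multiplication `m` with
identity `one`: it is a commutative unital subring in which every nonzero element
has a multiplicative inverse. -/
def IsFieldWith {A : Type*} [AddCommGroup A] (m : A → A → A) (one : A) (F : Set A) : Prop :=
  one ∈ F ∧ (∀ x ∈ F, ∀ y ∈ F, x + y ∈ F) ∧ (∀ x ∈ F, -x ∈ F) ∧
  (∀ x ∈ F, ∀ y ∈ F, m x y ∈ F) ∧ (∀ x ∈ F, ∀ y ∈ F, m x y = m y x) ∧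
  (∀ x ∈ F, x ≠ 0 → ∃ y ∈ F, m x y = one ∧ m y x = one)

/-- A `G`-derivation on `R`: axioms (D0)–(D4).  Here `π a r b` denotes `π^a_b(r)`,
and (D0) holds by the finite support of `π a r : G →₀ R`. -/
structure GDeriv (R : Type*) [NonAssocRing R] (G : Type*) [Monoid G] where
  /-- the family of maps; `π a r b = π^a_b(r)` -/
  π : G → R → (G →₀ R)
  /-- (D1): `π^e_e = id` and `π^e_a = 0` for `a ≠ e` -/
  d1 : ∀ r : R, π 1 r = Finsupp.single 1 r
  /-- (D2): `π^a_b(1) = δ_{a,b}` -/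
  d2 : ∀ a : G, π a (1 : R) = Finsupp.single a (1 : R)
  /-- (D3): each `π^a_b` is additive -/
  d3 : ∀ (a : G) (r s : R), π a (r + s) = π a r + π a s
  /-- (D4): `π^{ab}_c = Σ_{df = c} π^a_d ∘ π^b_f` -/
  d4 : ∀ (a b : G) (r : R),
    π (a * b) r = (π b r).sum fun f s => (π a s).sum fun d t => Finsupp.single (d * f) t

namespace GDeriv

variable {R : Type*} [NonAssocRing R] {G : Type*} [Monoid G] (P : GDeriv R G)

/-- The multiplication of the Ore monoid ring `S = R[G;π]` on `G →₀ R`: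
the biadditive extension of `(r xᵃ)(s xᵇ) = Σ_c r π^a_c(s) x^{cb}`. -/
noncomputable def mul (u v : G →₀ R) : G →₀ R :=
  u.sum fun a r => v.sum fun b s => (P.π a s).sum fun c t => Finsupp.single (c * b) (r * t)

/-- The multiplicative identity `1·xᵉ` of `S`. -/
noncomputable def one (_P : GDeriv R G) : G →₀ R := Finsupp.single 1 1

/-- `R^G = {r ∈ R : π^a_b(r) = δ_{a,b} r}`. -/
def fixed : Set R := {r | ∀ a : G, P.π a r = Finsupp.single a r}

/-- `S^G = Σ_a R^G xᵃ`, the elements of `S` all of whose coefficients lie in `R^G`. -/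
def fixedS : Set (G →₀ R) := {u | ∀ c : G, u c ∈ P.fixed}

/-- (D7): every `π^a_b` is left `R^G`-linear. -/
def LeftLinear : Prop := ∀ a b : G, ∀ s ∈ P.fixed, ∀ r : R, P.π a (s * r) b = s * P.π a r b

/-- (D8): every `π^a_b` is right `R^G`-linear. -/
def RightLinear : Prop := ∀ a b : G, ∀ r : R, ∀ s ∈ P.fixed, P.π a (r * s) b = P.π a r b * s

/-- `π` is strong if (D7) or (D8) holds. -/
def Strong : Prop := P.LeftLinear ∨ P.RightLinear

/-- (D6): `π^a_a = id_R` for all `a ∈ G` (i.e. `π` is unital). -/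
def Unital : Prop := ∀ (a : G) (r : R), P.π a r a = r

/-- `π` is commutative: `π^a_b ∘ π^c_d = π^c_d ∘ π^a_b`. -/
def Commutes : Prop := ∀ (a b c d : G) (r : R), P.π a (P.π c r d) b = P.π c (P.π a r b) d

/-- `π` is well-ordered: there is a well-order on `G` whose strict part `lt`
satisfies `π^a_b = 0` whenever `a ≺ b`. -/
def WellOrdered : Prop :=
  ∃ lt : G → G → Prop, IsWellOrder G lt ∧ ∀ a b : G, lt a b → ∀ r : R, P.π a r b = 0

/-- The extension `π̃^a_b : S → S`, `π̃^a_b(Σ_c r_c x^c) = Σ_c π^a_b(r_c) x^c`. -/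
noncomputable def ext (a b : G) (u : G →₀ R) : G →₀ R := u.sum fun c r => Finsupp.single c (P.π a r b)

/-- The commutator `[u,v] = uv - vu` in `S`. -/
noncomputable def commS (u v : G →₀ R) : G →₀ R := P.mul u v - P.mul v u

/-- The associator `(u,v,w) = (uv)w - u(vw)` in `S`. -/
noncomputable def assocS (u v w : G →₀ R) : G →₀ R := P.mul (P.mul u v) w - P.mul u (P.mul v w)

/-- The left nucleus `N_l(S)`. -/
def Nl : Set (G →₀ R) := {u | ∀ v w, P.assocS u v w = 0}

/-- The middle nucleus `N_m(S)`. -/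
def Nm : Set (G →₀ R) := {u | ∀ v w, P.assocS v u w = 0}

/-- The right nucleus `N_r(S)`. -/
def Nr : Set (G →₀ R) := {u | ∀ v w, P.assocS v w u = 0}

/-- The commuter `C(S)`. -/
def CS : Set (G →₀ R) := {u | ∀ v, P.mul u v = P.mul v u}

/-- The center `Z(S) = C(S) ∩ N_l(S) ∩ N_m(S) ∩ N_r(S)`. -/
def Z : Set (G →₀ R) := P.CS ∩ (P.Nl ∩ P.Nm ∩ P.Nr)

/-- `Z(S)^G = {s ∈ Z(S) : π̃^a_b(s) = δ_{a,b} s}`. -/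
def ZG : Set (G →₀ R) :=
  {s | s ∈ P.Z ∧ ∀ a b : G, P.ext a b s = if a = b then s else 0}

/-- `R` is `G`-simple: `{0}` and `R` are the only `G`-invariant ideals of `R`. -/
def RSimple : Prop :=
  ∀ J : Set R, IsIdealWith (· * ·) J → (∀ a b : G, ∀ r ∈ J, P.π a r b ∈ J) →
    J = {0} ∨ J = Set.univ

/-- `S` is `G`-simple: `{0}` and `S` are the only ideals of `S` invariant under all `π̃^a_b`. -/
def SSimple : Prop :=
  ∀ J : Set (G →₀ R), IsIdealWith P.mul J → (∀ a b : G, ∀ u ∈ J, P.ext a b u ∈ J) →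
    J = {0} ∨ J = Set.univ

end GDeriv

namespace GDeriv

section Aux

variable {R : Type*} [NonAssocRing R] {G : Type*} [Monoid G] (P : GDeriv R G)

lemma pi_zero (a : G) : P.π a 0 = 0 := by
  have h := P.d3 a 0 0
  rw [add_zero] at h
  exact (left_eq_add.mp h)

lemma mul_single_one_right (w : G →₀ R) (b : G) :
    P.mul w (Finsupp.single b (1 : R)) = Finsupp.mapDomain (· * b) w := by
  unfold mul
  rw [Finsupp.mapDomain]
  apply Finsupp.sum_congr
  intro a _
  rw [Finsupp.sum_single_index, P.d2, Finsupp.sum_single_index, mul_one]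
  · rw [mul_zero, Finsupp.single_zero]
  · rw [P.pi_zero, Finsupp.sum_zero_index]

lemma mul_single_one_left (r : R) (v : G →₀ R) :
    P.mul (Finsupp.single (1 : G) r) v = v.sum fun b t => Finsupp.single b (r * t) := by
  unfold mul
  rw [Finsupp.sum_single_index]
  · apply Finsupp.sum_congr
    intro b _
    rw [P.d1, Finsupp.sum_single_index, one_mul]
    rw [mul_zero, Finsupp.single_zero]
  · simp [zero_mul, Finsupp.single_zero, Finsupp.sum, Finset.sum_const_zero]

lemma mul_fixed_right {s : G →₀ R} (hs : s ∈ P.fixedS) (u : G →₀ R) :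
    P.mul u s = u.sum fun a r => s.sum fun b t => Finsupp.single (a * b) (r * t) := by
  unfold mul
  apply Finsupp.sum_congr
  intro a _
  apply Finsupp.sum_congr
  intro b _
  rw [hs b a, Finsupp.sum_single_index]
  rw [mul_zero, Finsupp.single_zero]

lemma mul_single_right (u : G →₀ R) (r : R) :
    P.mul u (Finsupp.single (1 : G) r)
      = u.sum fun a ra => (P.π a r).sum fun c t => Finsupp.single c (ra * t) := by
  unfold mul
  apply Finsupp.sum_congr
  intro a _
  rw [Finsupp.sum_single_index]
  · apply Finsupp.sum_congr
    intro c _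
    rw [mul_one]
  · rw [P.pi_zero, Finsupp.sum_zero_index]

end Aux

section Key

variable {R : Type*} [NonAssocRing R] {G : Type*} [CommMonoid G] (P : GDeriv R G)

lemma key {s : G →₀ R} (hs : s ∈ P.fixedS) (u : G →₀ R) :
    P.commS s u
      = u.sum fun b r => P.mul (P.commS s (Finsupp.single 1 r)) (Finsupp.single b (1 : R)) := by
  have hmds : ∀ (f : G → G) (x y : G →₀ R),
      Finsupp.mapDomain f (x - y) = Finsupp.mapDomain f x - Finsupp.mapDomain f y :=
    fun f x y => (Finsupp.mapDomain.addMonoidHom f).map_sub x y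
  have hmdsum : ∀ (f : G → G) (v : G →₀ R) (h : G → R → (G →₀ R)),
      Finsupp.mapDomain f (v.sum h) = v.sum fun a r => Finsupp.mapDomain f (h a r) :=
    fun f v h => map_finsuppSum (Finsupp.mapDomain.addMonoidHom f) v h
  have hterm : ∀ (b : G) (r : R),
      P.mul (P.commS s (Finsupp.single 1 r)) (Finsupp.single b (1 : R))
        = (s.sum fun a ra => (P.π a r).sum fun c t => Finsupp.single (c * b) (ra * t))
          - (s.sum fun c t => Finsupp.single (c * b) (r * t)) := by
    intro b r
    rw [mul_single_one_right, commS, hmds, mul_single_right, mul_single_one_left,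
      hmdsum, hmdsum]
    congr 1
    · apply Finsupp.sum_congr
      intro a _
      rw [hmdsum]
      apply Finsupp.sum_congr
      intro c _
      rw [Finsupp.mapDomain_single]
    · apply Finsupp.sum_congr
      intro c _
      rw [Finsupp.mapDomain_single]
  calc P.commS s u = P.mul s u - P.mul u s := rfl
    _ = u.sum fun b r =>
          (s.sum fun a ra => (P.π a r).sum fun c t => Finsupp.single (c * b) (ra * t))
          - (s.sum fun c t => Finsupp.single (c * b) (r * t)) := by
        rw [Finsupp.sum_sub]
        congr 1
        · rw [Finsupp.sum_comm]
          rfl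
        · rw [P.mul_fixed_right hs]
          apply Finsupp.sum_congr
          intro b _
          apply Finsupp.sum_congr
          intro c _
          rw [mul_comm b c]
    _ = _ := by
        apply Finsupp.sum_congr
        intro b _
        rw [hterm]

lemma mul_zero_left (v : G →₀ R) : P.mul 0 v = 0 := by
  unfold mul
  rw [Finsupp.sum_zero_index]

end Key

end GDeriv

/-- If `G` is commutative and `s ∈ S^G`, then for every `u ∈ S` the
commutator `[s,u]` lies in the additive subgroup of `S` generated by the products
`[s,r]·t` with `r ∈ R` (embedded as `r xᵉ`) and `t ∈ S`.  In particular, if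
`[s,r] = 0` for all `r ∈ R`, then `s ∈ C(S)`. -/
theorem stmt3 {R : Type*} [NonAssocRing R] {G : Type*} [CommMonoid G]
    (P : GDeriv R G) {s : G →₀ R} (hs : s ∈ P.fixedS) :
    (∀ u : G →₀ R, P.commS s u ∈ AddSubgroup.closure
      {z : G →₀ R | ∃ (r : R) (t : G →₀ R),
        z = P.mul (P.commS s (Finsupp.single 1 r)) t}) ∧
    ((∀ r : R, P.commS s (Finsupp.single 1 r) = 0) → s ∈ P.CS) := by
  constructor
  · intro u
    rw [P.key hs u, Finsupp.sum]
    exact AddSubgroup.sum_mem _ fun b _ =>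
      AddSubgroup.subset_closure ⟨u b, Finsupp.single b (1 : R), rfl⟩
  · intro h v
    have h0 : P.commS s v = 0 := by
      rw [P.key hs v]
      rw [Finsupp.sum]
      exact Finset.sum_eq_zero fun b _ => by rw [h (v b), P.mul_zero_left]
    exact sub_eq_zero.mp h0
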